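/- Let T : V → V be a linear isomorphism of a finite-dimensional real vector space with multiplicative Jordan decomposition T = T_H T_E T_U (hyperbolic, elliptic, unipotent commuting factors). Then the recurrent set of T equals fix(T_H) ∩ fix(T_U), the intersection of the fixed-point subspaces of the hyperbolic and unipotent parts. -/

import Mathlib

open Set Filter Topology

/-- The recurrent set of `T`: points in their own ω-limit set. -/
def recurrentSet {X : Type*} [TopologicalSpace X] (T : X → X) : Set X :=
  {x | MapClusterPt x Filter.atTop fun n => T^[n] x}

/-- `T = T_H T_E T_U` is a multiplicative Jordan decomposition: the factors commute,
`T_H` is diagonalizable with positive eigenvalues, `T_E` is an isometry for some norm,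
and `T_U` is unipotent. -/
structure IsMulJordanDecomp {V : Type*} [AddCommGroup V] [Module ℝ V]
    (T TH TE TU : V →ₗ[ℝ] V) : Prop where
  eq : T = TH ∘ₗ TE ∘ₗ TU
  commHE : Commute TH TE
  commHU : Commute TH TU
  commEU : Commute TE TU
  hyperbolic : ∃ (n : ℕ) (b : Module.Basis (Fin n) ℝ V) (c : Fin n → ℝ),
    (∀ i, 0 < c i) ∧ ∀ i, TH (b i) = c i • b i
  elliptic : ∃ N : V → ℝ, (∀ v, 0 ≤ N v) ∧ (∀ v, N v = 0 ↔ v = 0) ∧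
    (∀ v w, N (v + w) ≤ N v + N w) ∧ (∀ (r : ℝ) (v), N (r • v) = |r| * N v) ∧
    ∀ v, N (TE v) = N v
  unipotent : IsNilpotent (TU - LinearMap.id)

open Polynomial


section Aux

variable {V : Type*} [NormedAddCommGroup V] [NormedSpace ℝ V] [FiniteDimensional ℝ V]

private lemma norm_bounds (N : V → ℝ)
    (hnn : ∀ v, 0 ≤ N v) (hz : ∀ v, N v = 0 ↔ v = 0)
    (hadd : ∀ v w, N (v + w) ≤ N v + N w) (hsmul : ∀ (r : ℝ) (v), N (r • v) = |r| * N v) :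
    ∃ C₁ C₂ : ℝ, 0 < C₁ ∧ 0 < C₂ ∧ (∀ v, N v ≤ C₁ * ‖v‖) ∧ (∀ v, ‖v‖ ≤ C₂ * N v) := by
  classical
  have hN0 : N 0 = 0 := (hz 0).mpr rfl
  -- direction 1
  set e := Module.finBasis ℝ V with he
  set D : ℝ := ∑ i, ‖LinearMap.toContinuousLinearMap (e.coord i)‖ * N (e i) with hD
  have hDnn : 0 ≤ D := Finset.sum_nonneg fun i _ =>
    mul_nonneg (norm_nonneg _) (hnn _)
  have h1 : ∀ v, N v ≤ (D + 1) * ‖v‖ := by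
    intro v
    have hv : v = ∑ i, e.repr v i • e i := (e.sum_repr v).symm
    have h2 : N v ≤ ∑ i, N (e.repr v i • e i) := by
      calc N v = N (∑ i, e.repr v i • e i) := by rw [← hv]
        _ ≤ _ := Finset.le_sum_of_subadditive N hN0.le hadd _ _
    have h3 : ∀ i, N (e.repr v i • e i) ≤ (‖LinearMap.toContinuousLinearMap (e.coord i)‖ * N (e i)) * ‖v‖ := by
      intro i
      rw [hsmul]
      have : |e.repr v i| ≤ ‖LinearMap.toContinuousLinearMap (e.coord i)‖ * ‖v‖ := by
        have := (LinearMap.toContinuousLinearMap (e.coord i)).le_opNorm v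
        simpa [Real.norm_eq_abs] using this
      calc |e.repr v i| * N (e i) ≤ (‖LinearMap.toContinuousLinearMap (e.coord i)‖ * ‖v‖) * N (e i) :=
            mul_le_mul_of_nonneg_right this (hnn _)
        _ = (‖LinearMap.toContinuousLinearMap (e.coord i)‖ * N (e i)) * ‖v‖ := by ring
    calc N v ≤ ∑ i, N (e.repr v i • e i) := h2
      _ ≤ ∑ i, (‖LinearMap.toContinuousLinearMap (e.coord i)‖ * N (e i)) * ‖v‖ :=
          Finset.sum_le_sum fun i _ => h3 i
      _ = D * ‖v‖ := by rw [← Finset.sum_mul]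
      _ ≤ (D + 1) * ‖v‖ := by nlinarith [norm_nonneg v]
  set C₁ := D + 1 with hC1def
  have hC₁ : 0 < C₁ := by linarith
  -- continuity of N
  have hNneg : ∀ v, N (-v) = N v := by
    intro v
    have := hsmul (-1) v
    simpa using this
  have hsub : ∀ x y, N x - N y ≤ N (x - y) := by
    intro x y
    have := hadd (x - y) y
    simp only [sub_add_cancel] at this
    linarith
  have hlip : LipschitzWith (Real.toNNReal C₁) N := by
    apply LipschitzWith.of_dist_le_mul
    intro x y
    rw [Real.dist_eq, dist_eq_norm, Real.coe_toNNReal _ hC₁.le]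
    have h1' : N x - N y ≤ C₁ * ‖x - y‖ := le_trans (hsub x y) (h1 _)
    have h2' : N y - N x ≤ C₁ * ‖x - y‖ := by
      have := le_trans (hsub y x) (h1 (y - x))
      have e1 : ‖y - x‖ = ‖x - y‖ := norm_sub_rev y x
      linarith [this, e1 ▸ this]
    exact abs_sub_le_iff.mpr ⟨h1', h2'⟩
  have hcont : Continuous N := hlip.continuous
  -- direction 2
  rcases subsingleton_or_nontrivial V with hV | hV
  · refine ⟨C₁, 1, hC₁, one_pos, h1, fun v => ?_⟩
    have : v = 0 := Subsingleton.elim v 0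
    simp [this, hN0]
  · have hsne : (Metric.sphere (0 : V) 1).Nonempty := NormedSpace.sphere_nonempty.mpr zero_le_one
    obtain ⟨x₀, hx₀s, hmin⟩ := (isCompact_sphere (0 : V) 1).exists_isMinOn hsne hcont.continuousOn
    have hx₀ : ‖x₀‖ = 1 := by simpa using mem_sphere_zero_iff_norm.mp hx₀s
    have hx₀ne : x₀ ≠ 0 := by
      intro h; rw [h] at hx₀; simp at hx₀
    have hm : 0 < N x₀ := by
      have hne0 : N x₀ ≠ 0 := fun h => hx₀ne ((hz x₀).mp h)
      exact lt_of_le_of_ne (hnn _) (Ne.symm hne0)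
    refine ⟨C₁, (N x₀)⁻¹, hC₁, inv_pos.mpr hm, h1, fun v => ?_⟩
    rcases eq_or_ne v 0 with rfl | hv
    · simp [hN0]
    · have hvn : 0 < ‖v‖ := norm_pos_iff.mpr hv
      have hmem : ‖v‖⁻¹ • v ∈ Metric.sphere (0 : V) 1 := by
        simp [norm_smul, abs_of_pos (inv_pos.mpr hvn), inv_mul_cancel₀ hvn.ne']
      have hthis := hmin hmem
      simp only [Set.mem_setOf_eq] at hthis
      have hNx : N (‖v‖⁻¹ • v) = ‖v‖⁻¹ * N v := by
        rw [hsmul, abs_of_pos (inv_pos.mpr hvn)]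
      rw [hNx] at hthis
      have this := hthis
      have h5 : N x₀ * ‖v‖ ≤ N v := by
        have := mul_le_mul_of_nonneg_right this hvn.le
        rwa [inv_mul_eq_div, div_mul_cancel₀ _ hvn.ne'] at this
      calc ‖v‖ = (N x₀)⁻¹ * (N x₀ * ‖v‖) := by field_simp
        _ ≤ (N x₀)⁻¹ * N v := mul_le_mul_of_nonneg_left h5 (inv_pos.mpr hm).le

end Aux


section Aux2

private lemma commute_aeval {A : Type*} [Ring A] [Algebra ℝ A] {a b : A}
    (h : Commute a b) (p : Polynomial ℝ) : Commute (Polynomial.aeval a p) b := by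
  induction p using Polynomial.induction_on' with
  | add p q hp hq => rw [map_add]; exact hp.add_left hq
  | monomial n r =>
    rw [Polynomial.aeval_monomial]
    exact (Algebra.commute_algebraMap_left r b).mul_left (h.pow_left n)


private lemma exists_top {V : Type*} [AddCommGroup V] [Module ℝ V]
    (n0 : V →ₗ[ℝ] V) (d : ℕ) (hd : n0 ^ d = 0) {w : V} {j : ℕ}
    (hj : (n0 ^ j) w ≠ 0) :
    ∃ m, j ≤ m ∧ (n0 ^ m) w ≠ 0 ∧ (n0 ^ (m + 1)) w = 0 := by
  classical
  have hn0w0 : (n0 ^ d) w = 0 := by rw [hd]; rfl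
  set P : ℕ → Prop := fun i => (n0 ^ i) w ≠ 0 with hP
  have hPj : P j := hj
  have hjd : j ≤ d := by
    by_contra h
    push_neg at h
    apply hj
    have hpow : n0 ^ j = n0 ^ (j - d) * n0 ^ d := by rw [← pow_add]; congr 1; omega
    rw [hpow, Module.End.mul_apply, hn0w0, map_zero]
  have hPm : P (Nat.findGreatest P d) := Nat.findGreatest_spec hjd hPj
  have hPm' : (n0 ^ Nat.findGreatest P d) w ≠ 0 := hPm
  refine ⟨Nat.findGreatest P d, Nat.le_findGreatest hjd hPj, hPm', ?_⟩
  have hlt : Nat.findGreatest P d < d := by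
    rcases lt_or_eq_of_le (Nat.findGreatest_le (P := P) d) with h | h
    · exact h
    · exfalso; apply hPm'; rw [h]; exact hn0w0
  by_contra hne
  exact Nat.findGreatest_is_greatest (P := P) (n := d) (lt_add_one _) (by omega) hne

variable {V : Type*} [NormedAddCommGroup V] [NormedSpace ℝ V] [FiniteDimensional ℝ V]

private lemma key (N : V → ℝ) {C₁ C₂ : ℝ} (hC₁ : 0 < C₁) (hC₂ : 0 < C₂)
    (hN1 : ∀ v, N v ≤ C₁ * ‖v‖) (hN2 : ∀ v, ‖v‖ ≤ C₂ * N v)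
    (hnn : ∀ v, 0 ≤ N v) (hz : ∀ v, N v = 0 ↔ v = 0)
    (hadd : ∀ v w, N (v + w) ≤ N v + N w) (hsmul : ∀ (r : ℝ) (v), N (r • v) = |r| * N v)
    (TU : V →ₗ[ℝ] V) (hU : IsNilpotent (TU - LinearMap.id))
    {r : ℝ} (hr : 0 < r) (w : V) (u : ℕ → V)
    (hu : MapClusterPt w atTop u)
    (hNu : ∀ k, N (u k) = r ^ k * N ((TU ^ k) w)) :
    TU w = w ∧ (r = 1 ∨ w = 0) := by
  classical
  obtain ⟨d, hd⟩ := hU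
  set n0 : V →ₗ[ℝ] V := TU - 1 with hn0
  have hdId : TU - LinearMap.id = n0 := rfl
  rw [hdId] at hd
  have hTU1 : TU = 1 + n0 := by rw [hn0]; abel
  have hcomm : Commute TU n0 := (Commute.refl TU).sub_right (Commute.one_right TU)
  have hN0 : N 0 = 0 := (hz 0).mpr rfl
  -- frequently bounded
  set K : ℝ := C₁ * (‖w‖ + 1) with hK
  have hKpos : 0 < K := by positivity
  have hfreq : ∃ᶠ k in atTop, N (u k) ≤ K := by
    have hb : Metric.ball w 1 ∈ 𝓝 w := Metric.ball_mem_nhds w one_pos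
    have := mapClusterPt_iff_frequently.mp hu _ hb
    refine this.mono fun k hk => ?_
    have h1 : ‖u k‖ ≤ ‖w‖ + 1 := by
      have := Metric.mem_ball.mp hk
      rw [dist_eq_norm] at this
      calc ‖u k‖ = ‖(u k - w) + w‖ := by rw [sub_add_cancel]
        _ ≤ ‖u k - w‖ + ‖w‖ := norm_add_le _ _
        _ ≤ ‖w‖ + 1 := by linarith
    calc N (u k) ≤ C₁ * ‖u k‖ := hN1 _
      _ ≤ K := by rw [hK]; nlinarith
  have habs : ∀ f : ℕ → ℝ, Tendsto f atTop atTop → (∀ k, f k ≤ N (u k)) → False := by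
    intro f hf hle
    have hev : ∀ᶠ k in atTop, K < f k := hf.eventually_gt_atTop K
    obtain ⟨k, hk1, hk2⟩ := (hfreq.and_eventually hev).exists
    linarith [hle k]
  -- nilpotency helpers
  have hn0w0 : (n0 ^ d) w = 0 := by rw [hd]; rfl
  rcases lt_trichotomy r 1 with hlt | heq | hgt
  · -- r < 1 : w = 0
    -- binomial expansion bound
    have hexp : ∀ k, (TU ^ k) w = ∑ j ∈ Finset.range d, (k.choose j : ℝ) • ((n0 ^ j) w) := by
      intro k
      have hb : TU ^ k = ∑ j ∈ Finset.range (k + 1), n0 ^ j * (k.choose j : V →ₗ[ℝ] V) := by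
        have := (Commute.one_right n0).add_pow k
        rw [hTU1, add_comm (1 : V →ₗ[ℝ] V) n0, this]
        congr 1; funext j; rw [one_pow, mul_one]
      have happ : (TU ^ k) w = ∑ j ∈ Finset.range (k + 1), (k.choose j : ℝ) • ((n0 ^ j) w) := by
        rw [hb, LinearMap.sum_apply]
        congr 1; funext j
        rw [Module.End.mul_apply, Module.End.natCast_apply, map_nsmul,
          ← Nat.cast_smul_eq_nsmul ℝ]
      rw [happ]
      have hzero1 : ∀ j ∈ Finset.range (max (k + 1) d), j ∉ Finset.range (k + 1) →
          (k.choose j : ℝ) • ((n0 ^ j) w) = 0 := by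
        intro j _ hj
        rw [Finset.mem_range, not_lt] at hj
        rw [Nat.choose_eq_zero_of_lt (by omega)]
        simp
      have hzero2 : ∀ j ∈ Finset.range (max (k + 1) d), j ∉ Finset.range d →
          (k.choose j : ℝ) • ((n0 ^ j) w) = 0 := by
        intro j _ hj
        rw [Finset.mem_range, not_lt] at hj
        have : (n0 ^ j) w = 0 := by
          have : n0 ^ j = n0 ^ (j - d) * n0 ^ d := by
            rw [← pow_add]; congr 1; omega
          rw [this, Module.End.mul_apply, hn0w0, map_zero]
        rw [this, smul_zero]
      rw [Finset.sum_subset (Finset.range_subset_range.mpr (le_max_left _ _)) hzero1,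
        Finset.sum_subset (Finset.range_subset_range.mpr (le_max_right _ _)) hzero2]
    have hub : ∀ k, N (u k) ≤ ∑ j ∈ Finset.range d, ((k : ℝ) ^ j * r ^ k) * N ((n0 ^ j) w) := by
      intro k
      rw [hNu k, hexp k]
      have h1 : N (∑ j ∈ Finset.range d, (k.choose j : ℝ) • ((n0 ^ j) w)) ≤
          ∑ j ∈ Finset.range d, (k.choose j : ℝ) * N ((n0 ^ j) w) := by
        calc N _ ≤ ∑ j ∈ Finset.range d, N ((k.choose j : ℝ) • ((n0 ^ j) w)) :=
              Finset.le_sum_of_subadditive N hN0.le hadd _ _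
          _ = ∑ j ∈ Finset.range d, (k.choose j : ℝ) * N ((n0 ^ j) w) := by
              refine Finset.sum_congr rfl fun j _ => ?_
              rw [hsmul, Nat.abs_cast]
      have h2 : ∀ j, (k.choose j : ℝ) ≤ (k : ℝ) ^ j := by
        intro j
        calc (k.choose j : ℝ) ≤ (k : ℝ) ^ j / (j.factorial : ℝ) := Nat.choose_le_pow_div j k
          _ ≤ (k : ℝ) ^ j := by
            apply div_le_self (by positivity)
            exact_mod_cast Nat.one_le_iff_ne_zero.mpr j.factorial_ne_zero
      calc r ^ k * N (∑ j ∈ Finset.range d, (k.choose j : ℝ) • ((n0 ^ j) w))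
          ≤ r ^ k * ∑ j ∈ Finset.range d, (k.choose j : ℝ) * N ((n0 ^ j) w) :=
            mul_le_mul_of_nonneg_left h1 (by positivity)
        _ = ∑ j ∈ Finset.range d, r ^ k * ((k.choose j : ℝ) * N ((n0 ^ j) w)) := by
            rw [Finset.mul_sum]
        _ ≤ ∑ j ∈ Finset.range d, ((k : ℝ) ^ j * r ^ k) * N ((n0 ^ j) w) := by
            refine Finset.sum_le_sum fun j _ => ?_
            have := mul_le_mul_of_nonneg_right (h2 j) (hnn ((n0 ^ j) w))
            nlinarith [pow_pos hr k, hnn ((n0 ^ j) w), this]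
    have hto0 : Tendsto (fun k => N (u k)) atTop (𝓝 0) := by
      have hlim : Tendsto (fun k : ℕ => ∑ j ∈ Finset.range d, ((k : ℝ) ^ j * r ^ k) * N ((n0 ^ j) w))
          atTop (𝓝 0) := by
        have : Tendsto (fun k : ℕ => ∑ j ∈ Finset.range d, ((k : ℝ) ^ j * r ^ k) * N ((n0 ^ j) w))
            atTop (𝓝 (∑ j ∈ Finset.range d, 0)) := by
          refine tendsto_finset_sum _ fun j _ => ?_
          have h := tendsto_pow_const_mul_const_pow_of_lt_one j hr.le hlt
          simpa using h.mul_const (N ((n0 ^ j) w))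
        simpa using this
      exact squeeze_zero (fun k => hnn _) hub hlim
    have huto0 : Tendsto u atTop (𝓝 0) := by
      rw [tendsto_zero_iff_norm_tendsto_zero]
      exact squeeze_zero (fun k => norm_nonneg _) (fun k => hN2 (u k)) (by simpa using hto0.const_mul C₂)
    have hw0 : w = 0 := by
      have h1 : (𝓝 w ⊓ map u atTop).NeBot := hu
      have h2 : 𝓝 w ⊓ map u atTop ≤ 𝓝 w ⊓ 𝓝 0 := inf_le_inf_left _ huto0
      exact eq_of_nhds_neBot (h1.mono h2)
    subst hw0
    exact ⟨map_zero TU, Or.inr rfl⟩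
  · -- r = 1 : TU w = w
    subst heq
    refine ⟨?_, Or.inl rfl⟩
    by_contra hne
    have hn0wne : n0 w ≠ 0 := by
      rw [hn0, LinearMap.sub_apply, Module.End.one_apply, sub_ne_zero]
      exact hne
    have hwne : w ≠ 0 := fun h => hn0wne (by rw [h, map_zero])
    have hd1 : 1 ≤ d := by
      rcases Nat.eq_zero_or_pos d with h | h
      · exfalso; apply hwne; rw [h, pow_zero] at hn0w0; simpa using hn0w0
      · exact h
    have hj1 : (n0 ^ 1) w ≠ 0 := by rwa [pow_one]
    obtain ⟨m, hm1, hPm, hm1'⟩ := exists_top n0 d hd hj1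
    set z : V := (n0 ^ (m - 1)) w with hzdef
    set y : V := (n0 ^ m) w with hydef
    have hy : y ≠ 0 := hPm
    have hn0z : n0 z = y := by
      rw [hzdef, hydef, ← Module.End.mul_apply, ← pow_succ']
      congr 2; omega
    have hn0y : n0 y = 0 := by
      rw [hydef, ← Module.End.mul_apply, ← pow_succ', hm1']
    have h1z : TU z = z + y := by
      rw [hTU1, LinearMap.add_apply, Module.End.one_apply, hn0z]
    have h2y : TU y = y := by
      rw [hTU1, LinearMap.add_apply, Module.End.one_apply, hn0y, add_zero]
    have hTUy : ∀ k : ℕ, (TU ^ k) y = y := by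
      intro k
      induction k with
      | zero => simp
      | succ k ih => rw [pow_succ, Module.End.mul_apply, h2y, ih]
    have hTUz : ∀ k : ℕ, (TU ^ k) z = z + (k : ℝ) • y := by
      intro k
      induction k with
      | zero => simp
      | succ k ih =>
        rw [pow_succ, Module.End.mul_apply, h1z, map_add, ih, hTUy k]
        push_cast
        rw [add_smul, one_smul]
        abel
    have hcommk : ∀ k : ℕ, (n0 ^ (m - 1)) ((TU ^ k) w) = (TU ^ k) z := by
      intro k
      rw [hzdef, ← Module.End.mul_apply, ← Module.End.mul_apply,
        ((hcomm.symm.pow_pow (m - 1) k)).eq]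
    obtain ⟨g, hg1, hgy0⟩ := exists_dual_vector ℝ y (norm_ne_zero_iff.mpr hy)
    have hgy : g y = ‖y‖ := by simpa using hgy0
    set Q := LinearMap.toContinuousLinearMap (n0 ^ (m - 1)) with hQ
    set A : ℝ := ‖Q‖ * C₂ with hA
    have hAnn : 0 ≤ A := mul_nonneg (norm_nonneg _) hC₂.le
    have hchain : ∀ k : ℕ, g z + (k : ℝ) * ‖y‖ ≤ A * N (u k) := by
      intro k
      have e1 : g ((TU ^ k) z) = g z + (k : ℝ) * ‖y‖ := by
        rw [hTUz k, map_add, map_smul]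
        simp only [smul_eq_mul]
        rw [hgy]
      calc g z + (k : ℝ) * ‖y‖ = g ((TU ^ k) z) := e1.symm
        _ ≤ |g ((TU ^ k) z)| := le_abs_self _
        _ ≤ ‖g‖ * ‖(TU ^ k) z‖ := by
            rw [← Real.norm_eq_abs]; exact g.le_opNorm _
        _ = ‖(TU ^ k) z‖ := by rw [hg1, one_mul]
        _ = ‖(n0 ^ (m - 1)) ((TU ^ k) w)‖ := by rw [hcommk k]
        _ ≤ ‖Q‖ * ‖(TU ^ k) w‖ := Q.le_opNorm _
        _ ≤ ‖Q‖ * (C₂ * N ((TU ^ k) w)) :=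
            mul_le_mul_of_nonneg_left (hN2 _) (norm_nonneg _)
        _ = A * N ((TU ^ k) w) := by rw [hA]; ring
        _ = A * N (u k) := by rw [hNu k, one_pow, one_mul]
    -- contradiction
    have hyn : 0 < ‖y‖ := norm_pos_iff.mpr hy
    have hev : ∀ᶠ k : ℕ in atTop, A * K < g z + (k : ℝ) * ‖y‖ := by
      have h1 : Tendsto (fun k : ℕ => g z + (k : ℝ) * ‖y‖) atTop atTop := by
        apply tendsto_atTop_add_const_left
        exact (tendsto_natCast_atTop_atTop).atTop_mul_const hyn
      exact h1.eventually_gt_atTop _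
    obtain ⟨k, hk1, hk2⟩ := (hfreq.and_eventually hev).exists
    have := hchain k
    have hbound : A * N (u k) ≤ A * K := mul_le_mul_of_nonneg_left hk1 hAnn
    linarith
  · -- r > 1 : w = 0
    have hw0 : w = 0 := by
      by_contra hwne
      have hj0 : (n0 ^ 0) w ≠ 0 := by rw [pow_zero]; simpa using hwne
      obtain ⟨m, -, hPm, hm1'⟩ := exists_top n0 d hd hj0
      set y : V := (n0 ^ m) w with hydef
      have hy : y ≠ 0 := hPm
      have hn0y : n0 y = 0 := by
        rw [hydef, ← Module.End.mul_apply, ← pow_succ', hm1']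
      have h2y : TU y = y := by
        rw [hTU1, LinearMap.add_apply, Module.End.one_apply, hn0y, add_zero]
      have hTUy : ∀ k : ℕ, (TU ^ k) y = y := by
        intro k
        induction k with
        | zero => simp
        | succ k ih => rw [pow_succ, Module.End.mul_apply, h2y, ih]
      have hcommk : ∀ k : ℕ, (n0 ^ m) ((TU ^ k) w) = (TU ^ k) y := by
        intro k
        rw [hydef, ← Module.End.mul_apply, ← Module.End.mul_apply,
          ((hcomm.symm.pow_pow m k)).eq]
      obtain ⟨g, hg1, hgy0⟩ := exists_dual_vector ℝ y (norm_ne_zero_iff.mpr hy)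
      have hgy : g y = ‖y‖ := by simpa using hgy0
      set Q := LinearMap.toContinuousLinearMap (n0 ^ m) with hQ
      set A : ℝ := ‖Q‖ * C₂ with hA
      have hAnn : 0 ≤ A := mul_nonneg (norm_nonneg _) hC₂.le
      have hchain : ∀ k : ℕ, r ^ k * ‖y‖ ≤ A * N (u k) := by
        intro k
        have e1 : ‖y‖ ≤ A * N ((TU ^ k) w) := by
          calc ‖y‖ = g y := hgy.symm
            _ = g ((TU ^ k) y) := by rw [hTUy k]
            _ ≤ |g ((TU ^ k) y)| := le_abs_self _
            _ ≤ ‖g‖ * ‖(TU ^ k) y‖ := by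
                rw [← Real.norm_eq_abs]; exact g.le_opNorm _
            _ = ‖(n0 ^ m) ((TU ^ k) w)‖ := by rw [hg1, one_mul, hcommk k]
            _ ≤ ‖Q‖ * ‖(TU ^ k) w‖ := Q.le_opNorm _
            _ ≤ ‖Q‖ * (C₂ * N ((TU ^ k) w)) :=
                mul_le_mul_of_nonneg_left (hN2 _) (norm_nonneg _)
            _ = A * N ((TU ^ k) w) := by rw [hA]; ring
        calc r ^ k * ‖y‖ ≤ r ^ k * (A * N ((TU ^ k) w)) :=
              mul_le_mul_of_nonneg_left e1 (by positivity)
          _ = A * (r ^ k * N ((TU ^ k) w)) := by ring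
          _ = A * N (u k) := by rw [hNu k]
      have hyn : 0 < ‖y‖ := norm_pos_iff.mpr hy
      have hev : ∀ᶠ k : ℕ in atTop, A * K < r ^ k * ‖y‖ := by
        have h1 : Tendsto (fun k : ℕ => r ^ k * ‖y‖) atTop atTop :=
          (tendsto_pow_atTop_atTop_of_one_lt hgt).atTop_mul_const hyn
        exact h1.eventually_gt_atTop _
      obtain ⟨k, hk1, hk2⟩ := (hfreq.and_eventually hev).exists
      have := hchain k
      have hbound : A * N (u k) ≤ A * K := mul_le_mul_of_nonneg_left hk1 hAnn
      linarith
    subst hw0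
    exact ⟨map_zero TU, Or.inr rfl⟩

end Aux2

/-- the recurrent set of a linear isomorphism `T` of a finite-dimensional
real vector space equals `fix(T_H) ∩ fix(T_U)`, for the multiplicative Jordan
decomposition `T = T_H T_E T_U`. -/
theorem recurrentSet_eq_fix_inter_fix {V : Type*} [NormedAddCommGroup V] [NormedSpace ℝ V]
    [FiniteDimensional ℝ V] (T TH TE TU : V →ₗ[ℝ] V)
    (hbij : Function.Bijective T) (hJ : IsMulJordanDecomp T TH TE TU) :
    recurrentSet T = {v | TH v = v} ∩ {v | TU v = v} := by
  classical
  obtain ⟨nb, b, c, hcpos, hTHb⟩ := hJ.hyperbolic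
  obtain ⟨N, hnn, hz, hadd, hsmulN, hTEN⟩ := hJ.elliptic
  obtain ⟨C₁, C₂, hC₁, hC₂, hN1, hN2⟩ := norm_bounds N hnn hz hadd hsmulN
  have cHE := hJ.commHE
  have cHU := hJ.commHU
  have cEU := hJ.commEU
  have hTmul : T = TH * (TE * TU) := by rw [hJ.eq]; rfl
  have hTmul' : T = TE * TU * TH := hTmul.trans (cHE.mul_right cHU).eq
  have hTpow : ∀ k : ℕ, T ^ k = TE ^ k * TU ^ k * TH ^ k := by
    intro k
    rw [hTmul', (cHE.symm.mul_left cHU.symm).mul_pow, cEU.mul_pow]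
  have hNneg : ∀ x : V, N (-x) = N x := by
    intro x
    have := hsmulN (-1) x
    simpa using this
  have hTEk : ∀ (k : ℕ) (x : V), N ((TE ^ k) x) = N x := by
    intro k
    induction k with
    | zero => intro x; simp
    | succ k ih =>
      intro x
      rw [pow_succ, Module.End.mul_apply, ih (TE x), hTEN x]
  ext v
  simp only [recurrentSet, Set.mem_inter_iff, Set.mem_setOf_eq]
  constructor
  · intro hv
    set S : Finset ℝ := Finset.univ.image c with hS
    have hnodal : Polynomial.aeval TH (∏ s ∈ S, (X - C s)) = 0 := by
      apply b.ext
      intro i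
      have hci : c i ∈ S := Finset.mem_image_of_mem c (Finset.mem_univ i)
      rw [← Finset.prod_erase_mul S _ hci, map_mul, Module.End.mul_apply, LinearMap.zero_apply]
      have h0 : (Polynomial.aeval TH) (X - C (c i)) (b i) = 0 := by
        rw [map_sub, Polynomial.aeval_X, Polynomial.aeval_C, LinearMap.sub_apply,
          Module.algebraMap_end_apply, hTHb i, sub_self]
      rw [h0, map_zero]
    by_cases hSne : S.Nonempty
    · have hinj : Set.InjOn id (S : Set ℝ) := fun a _ b _ h => h
      have hsum1 : ∑ r ∈ S, Lagrange.basis S id r = 1 := Lagrange.sum_basis hinj hSne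
      set π : ℝ → (V →ₗ[ℝ] V) := fun r => Polynomial.aeval TH (Lagrange.basis S id r) with hπ
      have hsumπ : ∑ r ∈ S, π r = 1 := by
        calc ∑ r ∈ S, π r
            = Polynomial.aeval TH (∑ r ∈ S, Lagrange.basis S id r) := (map_sum _ _ _).symm
          _ = 1 := by rw [hsum1, map_one]
      have hvsum : v = ∑ r ∈ S, (π r) v := by
        have h := congrArg (fun f : V →ₗ[ℝ] V => f v) hsumπ
        simp only [LinearMap.sum_apply, Module.End.one_apply] at h
        exact h.symm
      have hmain : ∀ r ∈ S, TH ((π r) v) = (π r) v ∧ TU ((π r) v) = (π r) v := by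
        intro r hrS
        have hrpos : 0 < r := by
          obtain ⟨i, -, hie⟩ := Finset.mem_image.mp hrS
          exact hie ▸ hcpos i
        set w : V := (π r) v with hw
        have hpoly : (X - C r) * Lagrange.basis S id r
            = Polynomial.C (∏ s ∈ S.erase r, (r - s)⁻¹) * ∏ s ∈ S, (X - C s) := by
          unfold Lagrange.basis Lagrange.basisDivisor
          simp only [id_eq]
          rw [Finset.prod_mul_distrib, ← map_prod, ← Finset.mul_prod_erase S _ hrS]
          ring
        have hTHπ : ∀ x : V, TH ((π r) x) = r • (π r) x := by
          intro x
          have h1 : (TH - algebraMap ℝ (V →ₗ[ℝ] V) r) * π r = 0 := by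
            have h2 := congrArg (Polynomial.aeval TH) hpoly
            rw [map_mul, map_mul, map_sub, Polynomial.aeval_X, Polynomial.aeval_C, hnodal,
              mul_zero] at h2
            exact h2
          have h4 : (TH - algebraMap ℝ (V →ₗ[ℝ] V) r) ((π r) x) = 0 := by
            rw [← Module.End.mul_apply, h1, LinearMap.zero_apply]
          rwa [LinearMap.sub_apply, Module.algebraMap_end_apply, sub_eq_zero] at h4
        have hTHw : TH w = r • w := hTHπ v
        have cπH : Commute (π r) TH := commute_aeval (Commute.refl TH) _
        have cπE : Commute (π r) TE := commute_aeval cHE _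
        have cπU : Commute (π r) TU := commute_aeval cHU _
        have cπT : Commute (π r) T := by
          rw [hTmul]; exact cπH.mul_right (cπE.mul_right cπU)
        have hcommk : ∀ k : ℕ, T^[k] w = (π r) (T^[k] v) := by
          intro k
          rw [← Module.End.pow_apply, ← Module.End.pow_apply, hw, ← Module.End.mul_apply,
            ← Module.End.mul_apply, (cπT.pow_right k).symm.eq]
        have hwrec : MapClusterPt w atTop (fun k => T^[k] w) := by
          have hcont : Continuous (π r) := (π r).continuous_of_finiteDimensional
          have h5 := hv.continuousAt_comp (f := (π r)) hcont.continuousAt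
          have h6 : ((π r) ∘ fun k => T^[k] v) = fun k => T^[k] w := by
            funext k
            simp only [Function.comp_apply]
            rw [hcommk k]
          rwa [h6] at h5
        have hTHkw : ∀ k : ℕ, (TH ^ k) w = r ^ k • w := by
          intro k
          induction k with
          | zero => simp
          | succ k ih =>
            rw [pow_succ, Module.End.mul_apply, hTHw, map_smul, ih, smul_smul, ← pow_succ']
        have hNorb : ∀ k : ℕ, N (T^[k] w) = r ^ k * N ((TU ^ k) w) := by
          intro k
          rw [← Module.End.pow_apply, hTpow k, Module.End.mul_apply, Module.End.mul_apply,
            hTHkw k, map_smul, map_smul, hsmulN, hTEk, abs_of_pos (pow_pos hrpos k)]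
        obtain ⟨hTUw, hror⟩ := key N hC₁ hC₂ hN1 hN2 hnn hz hadd hsmulN TU hJ.unipotent
          hrpos w _ hwrec hNorb
        refine ⟨?_, hTUw⟩
        rcases hror with h1 | h0
        · rw [hTHw, h1, one_smul]
        · rw [h0, map_zero]
      constructor
      · conv_lhs => rw [hvsum, map_sum]
        conv_rhs => rw [hvsum]
        exact Finset.sum_congr rfl fun r hr => (hmain r hr).1
      · conv_lhs => rw [hvsum, map_sum]
        conv_rhs => rw [hvsum]
        exact Finset.sum_congr rfl fun r hr => (hmain r hr).2
    · have hempty : IsEmpty (Fin nb) := by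
        rw [← Finset.univ_eq_empty_iff]
        by_contra h
        exact hSne ((Finset.nonempty_iff_ne_empty.mpr h).image c)
      have hv0 : ∀ x : V, x = 0 := by
        intro x
        have h := b.sum_repr x
        rw [Finset.univ_eq_empty, Finset.sum_empty] at h
        exact h.symm
      exact ⟨by rw [hv0 v, map_zero], by rw [hv0 v, map_zero]⟩
  · rintro ⟨hH, hU⟩
    have hTHfix : ∀ k : ℕ, TH ((TE ^ k) v) = (TE ^ k) v := by
      intro k
      rw [← Module.End.mul_apply, (cHE.pow_right k).eq, Module.End.mul_apply, hH]
    have hTUfix : ∀ k : ℕ, TU ((TE ^ k) v) = (TE ^ k) v := by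
      intro k
      rw [← Module.End.mul_apply, (cEU.symm.pow_right k).eq, Module.End.mul_apply, hU]
    have horb : ∀ k : ℕ, T^[k] v = (TE ^ k) v := by
      intro k
      induction k with
      | zero => simp
      | succ k ih =>
        rw [Function.iterate_succ_apply', ih]
        have hstep : T ((TE ^ k) v) = TH (TE (TU ((TE ^ k) v))) := by rw [hJ.eq]; rfl
        have he : TE ((TE ^ k) v) = (TE ^ (k + 1)) v := by
          rw [pow_succ', Module.End.mul_apply]
        rw [hstep, hTUfix k, he, hTHfix (k + 1)]
    set R := C₂ * N v with hR
    have hmem : ∀ k : ℕ, (TE ^ k) v ∈ Metric.closedBall (0 : V) R := by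
      intro k
      rw [Metric.mem_closedBall, dist_zero_right]
      calc ‖(TE ^ k) v‖ ≤ C₂ * N ((TE ^ k) v) := hN2 _
        _ = R := by rw [hTEk k v]
    obtain ⟨a, -, φ, hφ, hlim⟩ := (isCompact_closedBall (0 : V) R).tendsto_subseq hmem
    refine mapClusterPt_iff_frequently.mpr fun s hs => ?_
    obtain ⟨ε, hε, hball⟩ := Metric.mem_nhds_iff.mp hs
    refine frequently_atTop.mpr fun K => ?_
    set ε' := ε / (2 * C₁ * C₂ + 1) with hε'
    have hden : (0 : ℝ) < 2 * C₁ * C₂ + 1 := by positivity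
    have hε'pos : 0 < ε' := div_pos hε hden
    obtain ⟨J, hJ2⟩ := Metric.tendsto_atTop.mp hlim ε' hε'pos
    set j' := max J (φ J + K) with hj'
    have hJj' : J ≤ j' := le_max_left _ _
    have hφj' : φ J + K ≤ φ j' := le_trans (le_max_right _ _) hφ.le_apply
    refine ⟨φ j' - φ J, by omega, ?_⟩
    apply hball
    rw [Metric.mem_ball, dist_eq_norm, horb (φ j' - φ J)]
    have h1 : N ((TE ^ (φ j' - φ J)) v - v) = N ((TE ^ (φ j')) v - (TE ^ (φ J)) v) := by
      rw [← hTEk (φ J) ((TE ^ (φ j' - φ J)) v - v), map_sub, ← Module.End.mul_apply, ← pow_add]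
      have hle : φ J ≤ φ j' := by omega
      rw [Nat.add_sub_cancel' hle]
    have t1 : N ((TE ^ (φ j')) v - a) ≤ C₁ * ε' := by
      calc N ((TE ^ (φ j')) v - a) ≤ C₁ * ‖(TE ^ (φ j')) v - a‖ := hN1 _
        _ ≤ C₁ * ε' := by
          have h := hJ2 j' hJj'
          simp only [Function.comp_apply] at h
          rw [dist_eq_norm] at h
          exact mul_le_mul_of_nonneg_left h.le hC₁.le
    have t2 : N (a - (TE ^ (φ J)) v) ≤ C₁ * ε' := by
      rw [← neg_sub, hNneg]
      calc N ((TE ^ (φ J)) v - a) ≤ C₁ * ‖(TE ^ (φ J)) v - a‖ := hN1 _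
        _ ≤ C₁ * ε' := by
          have h := hJ2 J le_rfl
          simp only [Function.comp_apply] at h
          rw [dist_eq_norm] at h
          exact mul_le_mul_of_nonneg_left h.le hC₁.le
    have h2 : N ((TE ^ (φ j')) v - (TE ^ (φ J)) v) ≤ C₁ * ε' + C₁ * ε' := by
      have e1 : (TE ^ (φ j')) v - (TE ^ (φ J)) v
          = ((TE ^ (φ j')) v - a) + (a - (TE ^ (φ J)) v) := by abel
      rw [e1]
      exact le_trans (hadd _ _) (by linarith)
    have hfin : (2 * C₁ * C₂ + 1) * ε' = ε := by
      rw [hε']; field_simp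
    calc ‖(TE ^ (φ j' - φ J)) v - v‖ ≤ C₂ * N ((TE ^ (φ j' - φ J)) v - v) := hN2 _
      _ = C₂ * N ((TE ^ (φ j')) v - (TE ^ (φ J)) v) := by rw [h1]
      _ ≤ C₂ * (C₁ * ε' + C₁ * ε') := mul_le_mul_of_nonneg_left h2 hC₂.le
      _ < ε := by nlinarith [hε'pos, hC₂, hC₁]
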